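/- For any two probability distributions p and q on a finite set of d elements with total variation distance (1/2)‖p−q‖₁ ≤ ε ≤ 1−1/d, the difference of Shannon entropies satisfies |H(p) − H(q)| ≤ ε·log(d−1) + h(ε), where h is the binary entropy function. -/

import Mathlib

open Matrix BigOperators
open scoped Kronecker ComplexOrder

noncomputable def shannonEntropy {d : ℕ} (p : Fin d → ℝ) : ℝ := ∑ x, Real.negMulLog (p x)

noncomputable def binEnt (x : ℝ) : ℝ := Real.negMulLog x + Real.negMulLog (1 - x)

def IsProb {d : ℕ} (p : Fin d → ℝ) : Prop := (∀ x, 0 ≤ p x) ∧ ∑ x, p x = 1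

def IsDensity {n : Type*} [Fintype n] [DecidableEq n] (ρ : Matrix n n ℂ) : Prop :=
  ρ.PosSemidef ∧ ρ.trace = 1

noncomputable def traceNorm {n : Type*} [Fintype n] [DecidableEq n] (A : Matrix n n ℂ) : ℝ :=
  ∑ i, Real.sqrt ((Matrix.posSemidef_conjTranspose_mul_self A).1.eigenvalues i)

noncomputable def vnEntropy {n : Type*} [Fintype n] [DecidableEq n] (ρ : Matrix n n ℂ) : ℝ :=
  if h : ρ.IsHermitian then ∑ i, Real.negMulLog (h.eigenvalues i) else 0

noncomputable def ptraceA {a b : ℕ} (ρ : Matrix (Fin a × Fin b) (Fin a × Fin b) ℂ) : Matrix (Fin b) (Fin b) ℂ :=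
  Matrix.of fun j j' => ∑ i, ρ (i, j) (i, j')

noncomputable def ptraceB {a b : ℕ} (ρ : Matrix (Fin a × Fin b) (Fin a × Fin b) ℂ) : Matrix (Fin a) (Fin a) ℂ :=
  Matrix.of fun i i' => ∑ j, ρ (i, j) (i', j)

noncomputable def condEnt {a b : ℕ} (ρ : Matrix (Fin a × Fin b) (Fin a × Fin b) ℂ) : ℝ :=
  vnEntropy ρ - vnEntropy (ptraceA ρ)

noncomputable def posPart {n : Type*} [Fintype n] [DecidableEq n] (A : Matrix n n ℂ) : Matrix n n ℂ :=
  if h : A.IsHermitian then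
    (h.eigenvectorUnitary : Matrix n n ℂ) * Matrix.diagonal (fun i => ((max (h.eigenvalues i) 0 : ℝ) : ℂ)) *
      (h.eigenvectorUnitary : Matrix n n ℂ)ᴴ
  else 0

noncomputable def matLog {n : Type*} [Fintype n] [DecidableEq n] (A : Matrix n n ℂ) : Matrix n n ℂ :=
  if h : A.IsHermitian then
    (h.eigenvectorUnitary : Matrix n n ℂ) * Matrix.diagonal (fun i => (Real.log (h.eigenvalues i) : ℂ)) *
      (h.eigenvectorUnitary : Matrix n n ℂ)ᴴ
  else 0

noncomputable def relEnt {n : Type*} [Fintype n] [DecidableEq n] (ρ γ : Matrix n n ℂ) : ℝ :=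
  ((ρ * (matLog ρ - matLog γ)).trace).re

open Classical in
noncomputable def matSqrt {n : Type*} [Fintype n] [DecidableEq n] (A : Matrix n n ℂ) : Matrix n n ℂ :=
  if h : A.PosSemidef then (h.1.eigenvectorUnitary : Matrix n n ℂ) *
    Matrix.diagonal ((↑) ∘ (Real.sqrt ·) ∘ h.1.eigenvalues) * (star h.1.eigenvectorUnitary : Matrix n n ℂ) else 0

noncomputable def fidelity {n : Type*} [Fintype n] [DecidableEq n] (ρ σ : Matrix n n ℂ) : ℝ :=
  traceNorm (matSqrt ρ * matSqrt σ)

noncomputable def maxEig {n : Type*} [Fintype n] [DecidableEq n] (A : Matrix n n ℂ) : ℝ :=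
  if h : A.IsHermitian then ⨆ i, h.eigenvalues i else 0

noncomputable def outer {n : Type*} [Fintype n] (v : n → ℂ) : Matrix n n ℂ :=
  Matrix.vecMulVec v (star v)


lemma negMulLog_subadd {a b : ℝ} (ha : 0 ≤ a) (hb : 0 ≤ b) :
    Real.negMulLog (a + b) ≤ Real.negMulLog a + Real.negMulLog b := by
  have h1 : a * Real.log a ≤ a * Real.log (a + b) := by
    rcases eq_or_lt_of_le ha with h | h
    · simp [← h]
    · exact mul_le_mul_of_nonneg_left (Real.log_le_log h (by linarith)) ha
  have h2 : b * Real.log b ≤ b * Real.log (a + b) := by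
    rcases eq_or_lt_of_le hb with h | h
    · simp [← h]
    · exact mul_le_mul_of_nonneg_left (Real.log_le_log h (by linarith)) hb
  simp only [Real.negMulLog, neg_mul]
  nlinarith

lemma maxent {d : ℕ} (w : Fin d → ℝ) (hw0 : ∀ x, 0 ≤ w x) (hw1 : ∑ x, w x = 1)
    (S : Finset (Fin d)) (hS : ∀ x, w x ≠ 0 → x ∈ S) (n : ℝ) (hn : 1 ≤ n)
    (hcard : (S.card : ℝ) ≤ n) : ∑ x, Real.negMulLog (w x) ≤ Real.log n := by
  have hn0 : 0 < n := by linarith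
  have hsum : ∑ x, Real.negMulLog (w x) = ∑ x ∈ S, Real.negMulLog (w x) := by
    refine (Finset.sum_subset (Finset.subset_univ S) ?_).symm
    intro x _ hx
    have : w x = 0 := by by_contra h; exact hx (hS x h)
    simp [this]
  rw [hsum]
  have hpt : ∀ x ∈ S, Real.negMulLog (w x) ≤ 1/n - w x + w x * Real.log n := by
    intro x _
    rcases eq_or_lt_of_le (hw0 x) with h | h
    · simp only [← h, Real.negMulLog_zero]
      have : (0:ℝ) ≤ 1/n := by positivity
      simpa using this
    · have hlog : Real.log (1 / (w x * n)) ≤ 1 / (w x * n) - 1 :=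
        Real.log_le_sub_one_of_pos (by positivity)
      have hlogeq : Real.log (1 / (w x * n)) = - Real.log (w x) - Real.log n := by
        rw [Real.log_div one_ne_zero (by positivity), Real.log_one, Real.log_mul h.ne' hn0.ne']
        ring
      have := mul_le_mul_of_nonneg_left hlog (hw0 x)
      rw [hlogeq] at this
      have h2 : w x * (1 / (w x * n) - 1) = 1/n - w x := by
        field_simp
      rw [h2] at this
      simp only [Real.negMulLog, neg_mul]
      nlinarith
  calc ∑ x ∈ S, Real.negMulLog (w x) ≤ ∑ x ∈ S, (1/n - w x + w x * Real.log n) :=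
        Finset.sum_le_sum hpt
    _ = S.card * (1/n) - ∑ x ∈ S, w x + (∑ x ∈ S, w x) * Real.log n := by
        rw [Finset.sum_add_distrib, Finset.sum_sub_distrib, ← Finset.sum_mul]
        simp [mul_comm]
    _ ≤ Real.log n := by
        have hSsum : ∑ x ∈ S, w x = 1 := by
          rw [← hw1]
          exact Finset.sum_subset (Finset.subset_univ S) fun x _ hx => by
            by_contra h; exact hx (hS x h)
        rw [hSsum]
        have : (S.card : ℝ) * (1/n) ≤ 1 := by
          rw [mul_one_div, div_le_one hn0]; exact hcard
        linarith

lemma f_mono (n : ℝ) (hn : 1 ≤ n) {a b : ℝ} (ha : 0 ≤ a) (hab : a ≤ b) (hb : b ≤ n/(n+1)) :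
    a * Real.log n + binEnt a ≤ b * Real.log n + binEnt b := by
  have hn0 : 0 < n := by linarith
  have hM : 0 < n / (n+1) := by positivity
  have hM1 : n / (n+1) < 1 := by rw [div_lt_one (by linarith)]; linarith
  set M := n / (n+1) with hMdef
  have hmono : MonotoneOn (fun ε => ε * Real.log n + binEnt ε) (Set.Icc 0 M) := by
    apply monotoneOn_of_deriv_nonneg (convex_Icc 0 M)
    · unfold binEnt
      fun_prop
    · rw [interior_Icc]
      intro x hx
      exact (((hasDerivAt_id x).mul_const (Real.log n)).add
        (((Real.hasDerivAt_negMulLog (ne_of_gt hx.1)).add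
          (((Real.hasDerivAt_negMulLog (show (1:ℝ) - x ≠ 0 by
            have := hx.2.trans hM1; intro h; linarith)).comp x
            ((hasDerivAt_id x).const_sub 1)))))).differentiableAt.differentiableWithinAt
    · rw [interior_Icc]
      intro x hx
      have hx1 : x < 1 := hx.2.trans hM1
      have hd : HasDerivAt (fun ε => ε * Real.log n + binEnt ε)
          (1 * Real.log n + ((-Real.log x - 1) + (-Real.log (1-x) - 1) * (-1))) x := by
        exact ((hasDerivAt_id x).mul_const (Real.log n)).add
          ((Real.hasDerivAt_negMulLog (ne_of_gt hx.1)).add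
            ((Real.hasDerivAt_negMulLog (show (1:ℝ) - x ≠ 0 by linarith)).comp x
              ((hasDerivAt_id x).const_sub 1)))
      rw [hd.deriv]
      have hxn : x ≤ n * (1 - x) := by
        have : x * (n + 1) < n := (lt_div_iff₀ (by linarith)).mp hx.2
        nlinarith
      have hlog : Real.log x ≤ Real.log (n * (1 - x)) := Real.log_le_log hx.1 hxn
      rw [Real.log_mul hn0.ne' (by linarith)] at hlog
      linarith
  have := hmono ⟨ha, hab.trans hb⟩ ⟨ha.trans hab, hb⟩ hab
  simpa using this

lemma fannes_key {d : ℕ} (hd : 2 ≤ d) (p q : Fin d → ℝ) (hp : IsProb p) (hq : IsProb q)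
    {T : ℝ} (hT : (1/2) * ∑ x, |p x - q x| = T) (hT0 : 0 < T) (hT1 : T < 1) :
    shannonEntropy p - shannonEntropy q ≤ T * Real.log ((d:ℝ) - 1) + binEnt T := by
  obtain ⟨hp0, hp1⟩ := hp
  obtain ⟨hq0, hq1⟩ := hq
  set u : Fin d → ℝ := fun x => max (p x - q x) 0 with hu
  set v : Fin d → ℝ := fun x => max (q x - p x) 0 with hv
  set m : Fin d → ℝ := fun x => min (p x) (q x) with hm
  have hu0 : ∀ x, 0 ≤ u x := fun x => le_max_right _ _
  have hv0 : ∀ x, 0 ≤ v x := fun x => le_max_right _ _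
  have hm0 : ∀ x, 0 ≤ m x := fun x => le_min (hp0 x) (hq0 x)
  have hum : ∀ x, m x + u x = p x := by
    intro x
    rcases le_total (p x) (q x) with h | h
    · rw [hm, hu]; simp only; rw [min_eq_left h, max_eq_right (by linarith)]; ring
    · rw [hm, hu]; simp only; rw [min_eq_right h, max_eq_left (by linarith)]; ring
  have hvm : ∀ x, m x + v x = q x := by
    intro x
    rcases le_total (p x) (q x) with h | h
    · rw [hm, hv]; simp only; rw [min_eq_left h, max_eq_left (by linarith)]; ring
    · rw [hm, hv]; simp only; rw [min_eq_right h, max_eq_right (by linarith)]; ring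
  have huv : ∀ x, u x + v x = |p x - q x| := by
    intro x
    rcases le_total (p x) (q x) with h | h
    · rw [hu, hv]; simp only
      rw [max_eq_right (by linarith), max_eq_left (by linarith), abs_of_nonpos (by linarith)]
      ring
    · rw [hu, hv]; simp only
      rw [max_eq_left (by linarith), max_eq_right (by linarith), abs_of_nonneg (by linarith)]
      ring
  have hsuv : ∑ x, u x + ∑ x, v x = 2 * T := by
    rw [← Finset.sum_add_distrib]
    have : ∑ x, (u x + v x) = ∑ x, |p x - q x| := Finset.sum_congr rfl fun x _ => huv x
    rw [this]; linarith [hT]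
  have hsuv2 : ∑ x, u x - ∑ x, v x = 0 := by
    rw [← Finset.sum_sub_distrib]
    have : ∑ x, (u x - v x) = ∑ x, (p x - q x) := by
      refine Finset.sum_congr rfl fun x _ => ?_
      have h1 := hum x; have h2 := hvm x; linarith
    rw [this, Finset.sum_sub_distrib, hp1, hq1]; ring
  have hsu : ∑ x, u x = T := by linarith
  have hsv : ∑ x, v x = T := by linarith
  have hsm : ∑ x, m x = 1 - T := by
    have : ∑ x, (m x + u x) = 1 := by
      rw [show ∑ x, (m x + u x) = ∑ x, p x from Finset.sum_congr rfl fun x _ => by rw [hum x]]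
      exact hp1
    rw [Finset.sum_add_distrib, hsu] at this; linarith
  have h1T : (0:ℝ) < 1 - T := by linarith
  set m' : Fin d → ℝ := fun x => m x / (1 - T) with hm'
  set u' : Fin d → ℝ := fun x => u x / T with hu'
  set v' : Fin d → ℝ := fun x => v x / T with hv'
  have hsm' : ∑ x, m' x = 1 := by rw [hm']; rw [← Finset.sum_div, hsm]; field_simp
  have hsu' : ∑ x, u' x = 1 := by rw [hu']; rw [← Finset.sum_div, hsu]; field_simp
  have hsv' : ∑ x, v' x = 1 := by rw [hv']; rw [← Finset.sum_div, hsv]; field_simp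
  have hm'0 : ∀ x, 0 ≤ m' x := fun x => div_nonneg (hm0 x) h1T.le
  have hu'0 : ∀ x, 0 ≤ u' x := fun x => div_nonneg (hu0 x) hT0.le
  have hv'0 : ∀ x, 0 ≤ v' x := fun x => div_nonneg (hv0 x) hT0.le
  have hpx : ∀ x, p x = (1 - T) * m' x + T * u' x := by
    intro x
    rw [hm', hu']; field_simp
    linarith [hum x]
  have hqx : ∀ x, q x = (1 - T) * m' x + T * v' x := by
    intro x
    rw [hm', hv']; field_simp
    linarith [hvm x]
  set Hm := ∑ x, Real.negMulLog (m' x) with hHm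
  set Hu := ∑ x, Real.negMulLog (u' x) with hHu
  set Hv := ∑ x, Real.negMulLog (v' x) with hHv
  -- upper bound on H(p)
  have stepA : shannonEntropy p ≤ binEnt T + (1 - T) * Hm + T * Hu := by
    have h1 : shannonEntropy p ≤
        ∑ x, (Real.negMulLog ((1 - T) * m' x) + Real.negMulLog (T * u' x)) := by
      refine Finset.sum_le_sum fun x _ => ?_
      rw [hpx x]
      exact negMulLog_subadd (mul_nonneg h1T.le (hm'0 x)) (mul_nonneg hT0.le (hu'0 x))
    have h2 : ∑ x, (Real.negMulLog ((1 - T) * m' x) + Real.negMulLog (T * u' x)) =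
        Real.negMulLog (1 - T) + (1 - T) * Hm + (Real.negMulLog T + T * Hu) := by
      have e : ∀ x : Fin d, Real.negMulLog ((1 - T) * m' x) + Real.negMulLog (T * u' x) =
          (m' x * Real.negMulLog (1 - T) + (1 - T) * Real.negMulLog (m' x)) +
          (u' x * Real.negMulLog T + T * Real.negMulLog (u' x)) := by
        intro x; rw [Real.negMulLog_mul, Real.negMulLog_mul]
      rw [Finset.sum_congr rfl fun x _ => e x]
      rw [Finset.sum_add_distrib, Finset.sum_add_distrib, Finset.sum_add_distrib,
        ← Finset.sum_mul, ← Finset.mul_sum, ← Finset.sum_mul, ← Finset.mul_sum, hsm', hsu']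
      ring
    rw [h2] at h1
    unfold binEnt
    linarith
  -- lower bound on H(q)
  have hvle : ∀ x, v' x ≤ 1 := by
    intro x
    rw [hv', div_le_one hT0, ← hsv]
    exact Finset.single_le_sum (fun i _ => hv0 i) (Finset.mem_univ x)
  have hHv0 : 0 ≤ Hv :=
    Finset.sum_nonneg fun x _ => Real.negMulLog_nonneg (hv'0 x) (hvle x)
  have stepC : (1 - T) * Hm ≤ shannonEntropy q := by
    have h1 : ∀ x : Fin d, (1 - T) * Real.negMulLog (m' x) + T * Real.negMulLog (v' x) ≤
        Real.negMulLog (q x) := by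
      intro x
      rw [hqx x]
      exact Real.concaveOn_negMulLog.2 (Set.mem_Ici.2 (hm'0 x)) (Set.mem_Ici.2 (hv'0 x))
        h1T.le hT0.le (by ring)
    have h2 := Finset.sum_le_sum fun x (_ : x ∈ Finset.univ) => h1 x
    rw [Finset.sum_add_distrib, ← Finset.mul_sum, ← Finset.mul_sum] at h2
    have : 0 ≤ T * Hv := mul_nonneg hT0.le hHv0
    unfold shannonEntropy
    rw [hHm]
    rw [hHv] at this
    linarith
  -- max entropy bound on Hu
  have hex : ∃ x₀ : Fin d, u x₀ = 0 := by
    by_contra h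
    push_neg at h
    have hall : ∀ x, q x < p x := by
      intro x
      by_contra hc
      push_neg at hc
      exact h x (by rw [hu]; simp only; rw [max_eq_right (by linarith)])
    have : ∑ x, q x < ∑ x, p x :=
      Finset.sum_lt_sum_of_nonempty (Finset.univ_nonempty_iff.2 ⟨⟨0, by omega⟩⟩)
        fun x _ => hall x
    rw [hp1, hq1] at this
    exact lt_irrefl _ this
  obtain ⟨x₀, hx₀⟩ := hex
  have hn1 : (1:ℝ) ≤ (d:ℝ) - 1 := by
    have : (2:ℝ) ≤ (d:ℝ) := by exact_mod_cast hd
    linarith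
  have stepD : Hu ≤ Real.log ((d:ℝ) - 1) := by
    refine maxent u' hu'0 hsu' (Finset.univ.erase x₀) ?_ _ hn1 ?_
    · intro x hx
      refine Finset.mem_erase.2 ⟨?_, Finset.mem_univ x⟩
      intro hxx
      apply hx
      rw [hxx]
      show u x₀ / T = 0
      rw [hx₀, zero_div]
    · rw [Finset.card_erase_of_mem (Finset.mem_univ x₀)]
      simp only [Finset.card_univ, Fintype.card_fin]
      rw [Nat.cast_sub (by omega)]
      simp
  have : T * Hu ≤ T * Real.log ((d:ℝ) - 1) := mul_le_mul_of_nonneg_left stepD hT0.le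
  linarith

theorem stmt_0 {d : ℕ} (hd : 2 ≤ d) (p q : Fin d → ℝ) (hp : IsProb p) (hq : IsProb q)
    (ε : ℝ) (hεd : ε ≤ 1 - 1 / (d : ℝ))
    (hdist : (1/2) * ∑ x, |p x - q x| ≤ ε) :
    |shannonEntropy p - shannonEntropy q| ≤ ε * Real.log ((d : ℝ) - 1) + binEnt ε := by
  have hdpos : (0:ℝ) < (d:ℝ) := by
    have : (2:ℝ) ≤ (d:ℝ) := by exact_mod_cast hd
    linarith
  have hn1 : (1:ℝ) ≤ (d:ℝ) - 1 := by
    have : (2:ℝ) ≤ (d:ℝ) := by exact_mod_cast hd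
    linarith
  have hT0 : 0 ≤ (1/2) * ∑ x, |p x - q x| := by positivity
  have hε0 : 0 ≤ ε := hT0.trans hdist
  have hform : ((d:ℝ) - 1) / ((d:ℝ) - 1 + 1) = 1 - 1/(d:ℝ) := by
    rw [show ((d:ℝ) - 1 + 1) = (d:ℝ) by ring]
    field_simp
  have hb : ε ≤ ((d:ℝ) - 1) / ((d:ℝ) - 1 + 1) := by rw [hform]; exact hεd
  rcases eq_or_lt_of_le hT0 with h0 | hpos
  · -- p = q
    have hzero : ∑ x, |p x - q x| = 0 := by linarith
    have hpq : p = q := by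
      funext x
      have := (Finset.sum_eq_zero_iff_of_nonneg fun i _ => abs_nonneg (p i - q i)).1 hzero
        x (Finset.mem_univ x)
      have := abs_eq_zero.1 this
      linarith
    rw [hpq, sub_self, abs_zero]
    have := f_mono ((d:ℝ) - 1) hn1 (le_refl (0:ℝ)) hε0 hb
    simp only [binEnt, zero_mul, Real.negMulLog_zero, sub_zero, Real.negMulLog_one,
      add_zero, zero_add] at this
    simp only [binEnt]
    linarith
  · have hTε : (1/2) * ∑ x, |p x - q x| ≤ ε := hdist
    have hT1 : (1/2) * ∑ x, |p x - q x| < 1 := by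
      have hM1 : ((d:ℝ) - 1) / ((d:ℝ) - 1 + 1) < 1 := by
        rw [div_lt_one (by linarith)]; linarith
      linarith
    have fm := f_mono ((d:ℝ) - 1) hn1 hT0 hTε hb
    have b1 := fannes_key hd p q hp hq rfl hpos hT1
    have hsymm : (1/2) * ∑ x, |q x - p x| = (1/2) * ∑ x, |p x - q x| := by
      congr 1
      exact Finset.sum_congr rfl fun x _ => abs_sub_comm _ _
    have b2 := fannes_key hd q p hq hp hsymm hpos hT1
    rw [abs_sub_le_iff]
    constructor <;> linarith
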